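/- arXiv:1312.6412 — 2 statements merged into one kernel-verified Lean document; each statement's English description precedes it below -/
import Mathlib

section
/- For all nonnegative integers k₀, k₁, k₂ with k₀+k₁+k₂ = k: x_{α₂}(−1)^{k₀+k₁+1} · x_{α₁}(−1)^{k₁} · x_{α₁+α₂}(−1)^{k₂} ∈ I_{k₂Λ₀+k₀Λ₁+k₁Λ₂}. -/
/- Setup: the nilpotent subalgebra 𝔫 ⊂ 𝔰𝔩(3,ℂ) spanned by E₁₂, E₂₃, E₁₃, its loop
algebra 𝔫̄ = 𝔫 ⊗ ℂ[t,t⁻¹], and the universal enveloping algebra U(𝔫̄). -/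

noncomputable section
open scoped TensorProduct

namespace PrincipalSubspaceSL3

attribute [local instance 100] LieRing.ofAssociativeRing

/-- 3×3 complex matrices. -/
abbrev gl3 : Type := Matrix (Fin 3) (Fin 3) ℂ

/-- The root vectors: `Egen 0 = x_{α₁} = E₁₂`, `Egen 1 = x_{α₂} = E₂₃`,
`Egen 2 = x_{α₁+α₂} = E₁₃`. -/
def Egen : Fin 3 → gl3
  | 0 => Matrix.single 0 1 1
  | 1 => Matrix.single 1 2 1
  | 2 => Matrix.single 0 2 1

lemma egen_lie_mem :
    ∀ x ∈ Submodule.span ℂ (Set.range Egen), ∀ y ∈ Submodule.span ℂ (Set.range Egen),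
      ⁅x, y⁆ ∈ Submodule.span ℂ (Set.range Egen) := by
  have key : ∀ a b : Fin 3, ⁅Egen a, Egen b⁆ ∈ Submodule.span ℂ (Set.range Egen) := by
    intro a b
    fin_cases a <;> fin_cases b <;>
      simp only [Egen, Ring.lie_def, Matrix.single_mul_single_same,
        Matrix.single_mul_single_of_ne, Fin.reduceEq, ne_eq, not_false_eq_true,
        one_mul, sub_zero, zero_sub, sub_self] <;>
      first
        | exact Submodule.zero_mem _
        | exact Submodule.subset_span ⟨2, rfl⟩
        | exact Submodule.neg_mem _ (Submodule.subset_span ⟨2, rfl⟩)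
  intro x hx
  induction hx using Submodule.span_induction with
  | mem x hxs =>
      obtain ⟨a, rfl⟩ := hxs
      intro y hy
      induction hy using Submodule.span_induction with
      | mem y hys => obtain ⟨b, rfl⟩ := hys; exact key a b
      | zero => simp
      | add y z hy hz hy' hz' => rw [lie_add]; exact Submodule.add_mem _ hy' hz'
      | smul c y hy hy' => rw [lie_smul]; exact Submodule.smul_mem _ _ hy'
  | zero => intro y hy; simp
  | add x z hx hz hx' hz' =>
      intro y hy; rw [add_lie]; exact Submodule.add_mem _ (hx' y hy) (hz' y hy)
  | smul c x hx hx' =>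
      intro y hy; rw [smul_lie]; exact Submodule.smul_mem _ _ (hx' y hy)

/-- The nilpotent Lie subalgebra 𝔫 = ℂE₁₂ ⊕ ℂE₂₃ ⊕ ℂE₁₃ of 𝔰𝔩(3,ℂ). -/
def nn : LieSubalgebra ℂ gl3 :=
  { Submodule.span ℂ (Set.range Egen) with
    lie_mem' := fun {x y} hx hy => egen_lie_mem x hx y hy }

/-- Laurent polynomials ℂ[t, t⁻¹]. -/
abbrev A : Type := LaurentPolynomial ℂ

/-- The loop algebra 𝔫̄ = 𝔫 ⊗ ℂ[t,t⁻¹]. -/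
abbrev nbar : Type := A ⊗[ℂ] nn

set_option synthInstance.maxHeartbeats 1000000 in
instance : LieAlgebra ℂ nbar where
  lie_smul c x y := by
    have h := lie_smul (algebraMap ℂ A c) x y
    rwa [algebraMap_smul, algebraMap_smul] at h

/-- The root vectors as elements of 𝔫. -/
def en (i : Fin 3) : nn := ⟨Egen i, Submodule.subset_span ⟨i, rfl⟩⟩

/-- `nx i m` is the element x_{α}(m) = x_α ⊗ tᵐ of 𝔫̄, where α is α₁, α₂, α₁+α₂
according to i = 0, 1, 2. -/
def nx (i : Fin 3) (m : ℤ) : nbar := LaurentPolynomial.T m ⊗ₜ[ℂ] en i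

/-- The universal enveloping algebra U(𝔫̄). -/
abbrev U : Type := UniversalEnvelopingAlgebra ℂ nbar

/-- `xg i m` is the element x_α(m) regarded inside U(𝔫̄). -/
def xg (i : Fin 3) (m : ℤ) : U := UniversalEnvelopingAlgebra.ι ℂ (nx i m)

/-- `Rtr k i t` = R^i_{-1,t} : the sum of x_{α_i}(m₁)⋯x_{α_i}(m_{k+1}) over all integer
tuples with every m_j ≤ -1 and m₁+⋯+m_{k+1} = -t (parametrized by m_j = -1 - n_j with
n : Fin (k+1) → ℕ, ∑ n = t - (k+1)).  Here i : Fin 2 refers to the simple root α_{i+1}. -/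
def Rtr (k : ℕ) (i : Fin 2) (t : ℤ) : U :=
  ∑ f ∈ Finset.Nat.antidiagonalTuple (k + 1) (t - (k + 1)).toNat,
    (List.ofFn fun j : Fin (k + 1) => xg i.castSucc (-1 - (f j : ℤ))).prod

/-- The left ideal J = Σ_{i,t≥k+1} U(𝔫̄)·R^i_{-1,t}. -/
def Jid (k : ℕ) : Submodule U U :=
  Submodule.span U {u : U | ∃ i : Fin 2, ∃ t : ℤ, (k : ℤ) + 1 ≤ t ∧ u = Rtr k i t}

/-- The left ideal U(𝔫̄)·𝔫̄₊, generated by the x_α(m) with m ≥ 0. -/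
def nplusIdeal : Submodule U U :=
  Submodule.span U {u : U | ∃ i : Fin 3, ∃ m : ℤ, 0 ≤ m ∧ u = xg i m}

/-- The left ideal I_{kΛ₀} = J + U(𝔫̄)·𝔫̄₊. -/
def IkL0 (k : ℕ) : Submodule U U := Jid k ⊔ nplusIdeal

/-- The left ideal I_{k₀Λ₀+k₁Λ₁+k₂Λ₂} = I_{kΛ₀} + U·x_{α₁}(-1)^{k₀+k₂+1}
+ U·x_{α₂}(-1)^{k₀+k₁+1} + U·x_{α₁+α₂}(-1)^{k₀+1} (with k = k₀+k₁+k₂). -/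
def Iwt (k k0 k1 k2 : ℕ) : Submodule U U :=
  IkL0 k ⊔ Submodule.span U {xg 0 (-1) ^ (k0 + k2 + 1)}
    ⊔ Submodule.span U {xg 1 (-1) ^ (k0 + k1 + 1)}
    ⊔ Submodule.span U {xg 2 (-1) ^ (k0 + 1)}


/-! ### Auxiliary lemmas for statement14 -/

set_option synthInstance.maxHeartbeats 4000000
set_option maxHeartbeats 4000000

section Aux

lemma en_lie_01 : ⁅en 0, en 1⁆ = en 2 := by
  apply Subtype.ext
  rw [LieSubalgebra.coe_bracket]
  show ⁅Egen 0, Egen 1⁆ = Egen 2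
  simp [Egen, Ring.lie_def, Matrix.single_mul_single_same,
    Matrix.single_mul_single_of_ne]

lemma en_lie_2 (i : Fin 3) : ⁅en 2, en i⁆ = 0 := by
  apply Subtype.ext
  rw [LieSubalgebra.coe_bracket, ZeroMemClass.coe_zero]
  show ⁅Egen 2, Egen i⁆ = 0
  fin_cases i <;>
    simp [Egen, Ring.lie_def, Matrix.single_mul_single_same,
      Matrix.single_mul_single_of_ne]

lemma nx_lie_01 (m p : ℤ) : ⁅nx 0 m, nx 1 p⁆ = nx 2 (m + p) := by
  show ⁅LaurentPolynomial.T m ⊗ₜ[ℂ] en 0, LaurentPolynomial.T p ⊗ₜ[ℂ] en 1⁆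
      = LaurentPolynomial.T (m + p) ⊗ₜ[ℂ] en 2
  rw [LieAlgebra.ExtendScalars.bracket_tmul, en_lie_01, LaurentPolynomial.T_add]

lemma nx_lie_2 (i : Fin 3) (m p : ℤ) : ⁅nx 2 m, nx i p⁆ = 0 := by
  show ⁅LaurentPolynomial.T m ⊗ₜ[ℂ] en 2, LaurentPolynomial.T p ⊗ₜ[ℂ] en i⁆ = 0
  rw [LieAlgebra.ExtendScalars.bracket_tmul, en_lie_2, TensorProduct.tmul_zero]

lemma xg_swap (m p : ℤ) : xg 0 m * xg 1 p = xg 1 p * xg 0 m + xg 2 (m + p) := by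
  have h := (UniversalEnvelopingAlgebra.ι ℂ (L := nbar)).map_lie (nx 0 m) (nx 1 p)
  rw [nx_lie_01, Ring.lie_def] at h
  have h2 : xg 0 m * xg 1 p - xg 1 p * xg 0 m = xg 2 (m + p) := h.symm
  rw [sub_eq_iff_eq_add] at h2
  rw [h2, add_comm]

lemma xg_comm2 (m p : ℤ) (i : Fin 3) : Commute (xg 2 m) (xg i p) := by
  have h := (UniversalEnvelopingAlgebra.ι ℂ (L := nbar)).map_lie (nx 2 m) (nx i p)
  rw [nx_lie_2, map_zero, Ring.lie_def] at h
  rw [commute_iff_eq]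
  exact sub_eq_zero.mp h.symm

/-- Key commutation: `x_{α₁}(m)·x_{α₂}(q)^{p+1}`. -/
lemma xg_mul_pow (m q : ℤ) (p : ℕ) :
    xg 0 m * xg 1 q ^ (p + 1)
      = xg 1 q ^ (p + 1) * xg 0 m + (p + 1) • (xg 2 (m + q) * xg 1 q ^ p) := by
  induction p with
  | zero => simpa using xg_swap m q
  | succ p ih =>
      have hc : xg 1 q ^ (p + 1) * xg 2 (m + q) = xg 2 (m + q) * xg 1 q ^ (p + 1) :=
        ((xg_comm2 (m + q) q 1).pow_right (p + 1)).symm.eq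
      calc xg 0 m * xg 1 q ^ (p + 1 + 1)
          = (xg 0 m * xg 1 q ^ (p + 1)) * xg 1 q := by
            rw [pow_succ, mul_assoc]
        _ = xg 1 q ^ (p + 1) * xg 0 m * xg 1 q
              + (p + 1) • (xg 2 (m + q) * xg 1 q ^ p) * xg 1 q := by
            rw [ih, add_mul]
        _ = xg 1 q ^ (p + 1) * (xg 0 m * xg 1 q)
              + (p + 1) • (xg 2 (m + q) * xg 1 q ^ (p + 1)) := by
            rw [smul_mul_assoc, mul_assoc (xg 2 (m + q)), ← pow_succ, mul_assoc]
        _ = xg 1 q ^ (p + 1) * (xg 1 q * xg 0 m) + xg 1 q ^ (p + 1) * xg 2 (m + q)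
              + (p + 1) • (xg 2 (m + q) * xg 1 q ^ (p + 1)) := by
            rw [xg_swap, mul_add]
        _ = xg 1 q ^ (p + 1 + 1) * xg 0 m
              + (p + 1 + 1) • (xg 2 (m + q) * xg 1 q ^ (p + 1)) := by
            rw [hc, ← mul_assoc, ← pow_succ, add_assoc,
              succ_nsmul (xg 2 (m + q) * xg 1 q ^ (p + 1)) (p + 1),
              add_comm (xg 2 (m + q) * xg 1 q ^ (p + 1))
                ((p + 1) • (xg 2 (m + q) * xg 1 q ^ (p + 1)))]

lemma nsmul_cancel_mem {S : Submodule U U} {x : U} (n : ℕ) (hn : 0 < n)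
    (h : n • x ∈ S) : x ∈ S := by
  have hx : ((n : ℂ)⁻¹ • (n • x) : U) = x := by
    rw [← Nat.cast_smul_eq_nsmul ℂ, smul_smul,
      inv_mul_cancel₀ (by exact_mod_cast hn.ne' : (n : ℂ) ≠ 0), one_smul]
  rw [← hx]
  exact S.smul_of_tower_mem _ h

lemma b0_mem_Iwt (k k0 k1 k2 : ℕ) : xg 0 0 ∈ Iwt k k0 k1 k2 := by
  have h1 : xg 0 0 ∈ nplusIdeal := Submodule.subset_span ⟨0, 0, le_refl 0, rfl⟩
  have h2 : xg 0 0 ∈ IkL0 k := Submodule.mem_sup_right h1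
  exact Submodule.mem_sup_left (Submodule.mem_sup_left (Submodule.mem_sup_left h2))

lemma agen_mem_Iwt (k k0 k1 k2 : ℕ) :
    xg 1 (-1) ^ (k0 + k1 + 1) ∈ Iwt k k0 k1 k2 :=
  Submodule.mem_sup_left (Submodule.mem_sup_right (Submodule.mem_span_singleton_self _))

lemma mul_mem_Iwt {k k0 k1 k2 : ℕ} (u : U) {v : U} (hv : v ∈ Iwt k k0 k1 k2) :
    u * v ∈ Iwt k k0 k1 k2 := by
  simpa [smul_eq_mul] using Submodule.smul_mem (Iwt k k0 k1 k2) u hv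

/-- Chain 1: `c^r · a^{s+k0+1} ∈ Iwt k k2 k0 k1` whenever `r + s = k2`. -/
lemma chain1 (k k0 k1 k2 : ℕ) : ∀ r s : ℕ, r + s = k2 →
    xg 2 (-1) ^ r * xg 1 (-1) ^ (s + k0 + 1) ∈ Iwt k k2 k0 k1 := by
  intro r
  induction r with
  | zero =>
      intro s hs
      rw [pow_zero, one_mul]
      have h : s = k2 := by omega
      subst h
      exact agen_mem_Iwt k s k0 k1
  | succ r ih =>
      intro s hs
      have hv := ih (s + 1) (by omega)
      have hexp : s + 1 + k0 + 1 = (s + k0 + 1) + 1 := by omega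
      rw [hexp] at hv
      set P : ℕ := s + k0 + 1 with hPdef
      have hcb : Commute (xg 0 0) (xg 2 (-1) ^ r) :=
        ((xg_comm2 (-1) 0 0).pow_left r).symm
      have hz : (0 : ℤ) + -1 = -1 := by norm_num
      have key : xg 0 0 * (xg 2 (-1) ^ r * xg 1 (-1) ^ (P + 1))
            - (xg 2 (-1) ^ r * xg 1 (-1) ^ (P + 1)) * xg 0 0
          = (P + 1) • (xg 2 (-1) ^ (r + 1) * xg 1 (-1) ^ P) := by
        rw [hcb.left_comm, mul_assoc]
        rw [xg_mul_pow, hz, mul_add, add_sub_cancel_left]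
        rw [mul_smul_comm, ← mul_assoc, ← pow_succ]
      have hmem : xg 0 0 * (xg 2 (-1) ^ r * xg 1 (-1) ^ (P + 1))
            - (xg 2 (-1) ^ r * xg 1 (-1) ^ (P + 1)) * xg 0 0 ∈ Iwt k k2 k0 k1 := by
        refine sub_mem (mul_mem_Iwt _ hv) ?_
        simpa [smul_eq_mul] using
          Submodule.smul_mem (Iwt k k2 k0 k1)
            (xg 2 (-1) ^ r * xg 1 (-1) ^ (P + 1)) (b0_mem_Iwt k k2 k0 k1)
      rw [key] at hmem
      exact nsmul_cancel_mem (P + 1) (Nat.succ_pos P) hmem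

/-- Chain 2: `z^j · c^{k2} · a^{s+k0+1} · b^n ∈ Iwt k k2 k0 k1`
whenever `n ≤ s` and `j + s = k1`. -/
lemma chain2 (k k0 k1 k2 : ℕ) : ∀ n j s : ℕ, n ≤ s → j + s = k1 →
    xg 2 (-2) ^ j * xg 2 (-1) ^ k2 * xg 1 (-1) ^ (s + k0 + 1) * xg 0 (-1) ^ n
      ∈ Iwt k k2 k0 k1 := by
  intro n
  induction n with
  | zero =>
      intro j s _ hjs
      rw [pow_zero, mul_one]
      have hQ := chain1 k k0 k1 k2 k2 0 (by omega)
      have hCA : Commute (xg 2 (-1) ^ k2) (xg 1 (-1) ^ s) :=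
        (xg_comm2 (-1) (-1) 1).pow_pow k2 s
      have heq : xg 2 (-2) ^ j * xg 2 (-1) ^ k2 * xg 1 (-1) ^ (s + k0 + 1)
          = (xg 2 (-2) ^ j * xg 1 (-1) ^ s)
              * (xg 2 (-1) ^ k2 * xg 1 (-1) ^ (0 + k0 + 1)) := by
        have hsplit : s + k0 + 1 = s + (0 + k0 + 1) := by omega
        rw [hsplit, pow_add]
        simp only [mul_assoc]
        rw [hCA.left_comm]
      rw [heq]
      exact mul_mem_Iwt _ hQ
  | succ n ih =>
      intro j s hns hjs
      obtain ⟨s', rfl⟩ : ∃ s', s = s' + 1 := ⟨s - 1, by omega⟩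
      have hexp : s' + 1 + k0 + 1 = (s' + k0 + 1) + 1 := by omega
      rw [hexp]
      set P : ℕ := s' + k0 + 1 with hPdef
      have h1 : xg 2 (-2) ^ j * xg 2 (-1) ^ k2 * xg 1 (-1) ^ (P + 1) * xg 0 (-1) ^ n
          ∈ Iwt k k2 k0 k1 := by
        have h := ih j (s' + 1) (by omega) (by omega)
        rwa [hexp] at h
      have h2 : xg 2 (-2) ^ (j + 1) * xg 2 (-1) ^ k2 * xg 1 (-1) ^ P * xg 0 (-1) ^ n
          ∈ Iwt k k2 k0 k1 := ih (j + 1) s' (by omega) (by omega)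
      have hw : (-1 : ℤ) + -1 = -2 := by norm_num
      have hab : xg 1 (-1) ^ (P + 1) * xg 0 (-1)
          = xg 0 (-1) * xg 1 (-1) ^ (P + 1) - (P + 1) • (xg 2 (-2) * xg 1 (-1) ^ P) := by
        have h := xg_mul_pow (-1) (-1) P
        rw [hw] at h
        rw [h]
        abel
      have hCb : Commute (xg 2 (-1) ^ k2) (xg 0 (-1)) :=
        (xg_comm2 (-1) (-1) 0).pow_left k2
      have hZb : Commute (xg 2 (-2) ^ j) (xg 0 (-1)) :=
        (xg_comm2 (-2) (-1) 0).pow_left j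
      have hCZ : Commute (xg 2 (-1) ^ k2) (xg 2 (-2)) :=
        (xg_comm2 (-1) (-2) 2).pow_left k2
      have key : xg 2 (-2) ^ j * xg 2 (-1) ^ k2 * xg 1 (-1) ^ (P + 1) * xg 0 (-1) ^ (n + 1)
          = xg 0 (-1) * (xg 2 (-2) ^ j * xg 2 (-1) ^ k2 * xg 1 (-1) ^ (P + 1) * xg 0 (-1) ^ n)
            - (P + 1) • (xg 2 (-2) ^ (j + 1) * xg 2 (-1) ^ k2 * xg 1 (-1) ^ P * xg 0 (-1) ^ n) := by
        rw [pow_succ' (xg 0 (-1)) n]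
        simp only [mul_assoc]
        rw [← mul_assoc (xg 1 (-1) ^ (P + 1)) (xg 0 (-1)) (xg 0 (-1) ^ n), hab,
          sub_mul, smul_mul_assoc]
        rw [mul_sub (xg 2 (-1) ^ k2), mul_sub (xg 2 (-2) ^ j)]
        rw [mul_smul_comm, mul_smul_comm]
        simp only [mul_assoc]
        congr 1
        · rw [hCb.left_comm, hZb.left_comm]
        · congr 1
          rw [hCZ.left_comm, ← mul_assoc (xg 2 (-2) ^ j) (xg 2 (-2)), ← pow_succ]
      rw [key]
      exact sub_mem (mul_mem_Iwt _ h1) (nsmul_mem h2 (P + 1))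

end Aux


/-- for k₀+k₁+k₂ = k,
x_{α₂}(−1)^{k₀+k₁+1}·x_{α₁}(−1)^{k₁}·x_{α₁+α₂}(−1)^{k₂} ∈ I_{k₂Λ₀+k₀Λ₁+k₁Λ₂}. -/
theorem statement14 (k : ℕ) (hk : 0 < k) (k0 k1 k2 : ℕ) (hsum : k0 + k1 + k2 = k) :
    xg 1 (-1) ^ (k0 + k1 + 1) * xg 0 (-1) ^ k1 * xg 2 (-1) ^ k2 ∈ Iwt k k2 k0 k1 := by
  have h := chain2 k k0 k1 k2 k1 0 k1 le_rfl (by omega)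
  rw [pow_zero, one_mul] at h
  have he : k1 + k0 + 1 = k0 + k1 + 1 := by omega
  rw [he] at h
  have hc : Commute (xg 2 (-1) ^ k2)
      (xg 1 (-1) ^ (k0 + k1 + 1) * xg 0 (-1) ^ k1) :=
    (((xg_comm2 (-1) (-1) 1).pow_right (k0 + k1 + 1)).mul_right
      ((xg_comm2 (-1) (-1) 0).pow_right k1)).pow_left k2
  rw [← hc.eq, ← mul_assoc]
  exact h


end PrincipalSubspaceSL3
end
end

section
/- For all nonnegative integers k₁, k₂ with k₁+k₂ = k, there exist a nonzero constant c ∈ ℂ and an element a ∈ U(𝔫̄) such that x_{α₁}(−2)^{k₂+1} · x_{α₁}(−1)^{k₁} = c·R¹_{−1,2(k₂+1)+k₁} + a·x_{α₁}(−1)^{k₁+1}. -/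
/- Setup: the nilpotent subalgebra 𝔫 ⊂ 𝔰𝔩(3,ℂ) spanned by E₁₂, E₂₃, E₁₃, its loop
algebra 𝔫̄ = 𝔫 ⊗ ℂ[t,t⁻¹], and the universal enveloping algebra U(𝔫̄). -/

noncomputable section
open scoped TensorProduct
attribute [local instance 100] LieRing.ofAssociativeRing

namespace PrincipalSubspaceSL3

set_option synthInstance.maxHeartbeats 1000000
set_option maxHeartbeats 1000000
lemma nx_lie_self (m p : ℤ) : ⁅nx 0 m, nx 0 p⁆ = (0 : nbar) := by
  show ⁅LaurentPolynomial.T m ⊗ₜ[ℂ] en 0, LaurentPolynomial.T p ⊗ₜ[ℂ] en 0⁆ = 0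
  rw [LieAlgebra.ExtendScalars.bracket_tmul, lie_self, TensorProduct.tmul_zero]

lemma xg_comm (m p : ℤ) : xg 0 m * xg 0 p = xg 0 p * xg 0 m := by
  have h : ⁅xg 0 m, xg 0 p⁆ = 0 := by
    rw [xg, xg, ← LieHom.map_lie, nx_lie_self]; exact (UniversalEnvelopingAlgebra.ι ℂ).toLinearMap.map_zero
  rw [Ring.lie_def] at h
  exact sub_eq_zero.mp h

def S : Subalgebra ℂ U := Algebra.adjoin ℂ (Set.range fun m : ℤ => xg 0 m)

instance : CommRing S :=
  Algebra.adjoinCommRingOfComm ℂ (by rintro a ⟨m, rfl⟩ b ⟨p, rfl⟩; exact xg_comm m p)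

def y (m : ℤ) : S := ⟨xg 0 m, Algebra.subset_adjoin ⟨m, rfl⟩⟩

lemma val_y (m : ℤ) : (S.val (y m) : U) = xg 0 m := rfl

lemma list_prod_eq (n : ℕ) (g : Fin n → ℤ) :
    (List.ofFn fun j => xg 0 (g j)).prod = S.val (∏ j, y (g j)) := by
  rw [← List.prod_ofFn (f := fun j => y (g j))]
  erw [map_list_prod, List.map_ofFn]
  rfl

open Finset in
lemma prod_good (k k1 k2 : ℕ) (hsum : k1 + k2 = k) (f : Fin (k+1) → ℕ)
    (hmem : ∑ j, f j = k2 + 1) (hle : ∀ j, f j ≤ 1) :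
    ∏ j, y (-1 - (f j : ℤ)) = y (-2) ^ (k2+1) * y (-1) ^ k1 := by
  classical
  rw [← Finset.prod_filter_mul_prod_filter_not Finset.univ (fun j => f j = 1)]
  have h1 : ∀ j ∈ Finset.filter (fun j => f j = 1) Finset.univ,
      y (-1 - (f j : ℤ)) = y (-2) := by
    intro j hj; simp only [Finset.mem_filter] at hj
    rw [hj.2]; norm_num
  have h0 : ∀ j ∈ Finset.filter (fun j => ¬ f j = 1) Finset.univ,
      y (-1 - (f j : ℤ)) = y (-1) := by
    intro j hj; simp only [Finset.mem_filter] at hj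
    have : f j = 0 := by have := hle j; omega
    rw [this]; norm_num
  rw [Finset.prod_congr rfl h1, Finset.prod_congr rfl h0, Finset.prod_const,
    Finset.prod_const]
  have hcards : (Finset.filter (fun j => f j = 1) Finset.univ).card
      + (Finset.filter (fun j => ¬ f j = 1) Finset.univ).card = k + 1 := by
    rw [Finset.card_filter_add_card_filter_not, Finset.card_univ, Fintype.card_fin]
  have hsum1 : ∑ j, f j = (Finset.filter (fun j => f j = 1) Finset.univ).card := by
    rw [← Finset.sum_filter_add_sum_filter_not Finset.univ (fun j => f j = 1)]
    have e1 : ∑ j ∈ Finset.filter (fun j => f j = 1) Finset.univ, f j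
        = (Finset.filter (fun j => f j = 1) Finset.univ).card := by
      rw [Finset.sum_congr rfl (fun j hj => (Finset.mem_filter.mp hj).2),
        Finset.sum_const, smul_eq_mul, mul_one]
    have e0 : ∑ j ∈ Finset.filter (fun j => ¬ f j = 1) Finset.univ, f j = 0 := by
      refine Finset.sum_eq_zero fun j hj => ?_
      have := (Finset.mem_filter.mp hj).2; have := hle j; omega
    rw [e1, e0, add_zero]
  have c1 : (Finset.filter (fun j => f j = 1) Finset.univ).card = k2 + 1 := by omega
  have c0 : (Finset.filter (fun j => ¬ f j = 1) Finset.univ).card = k1 := by omega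
  rw [c1, c0]
  rfl

open Finset in
lemma dvd_bad (k k1 k2 : ℕ) (hsum : k1 + k2 = k) (f : Fin (k+1) → ℕ)
    (hmem : ∑ j, f j = k2 + 1) (hbad : ¬ ∀ j, f j ≤ 1) :
    y (-1) ^ (k1+1) ∣ ∏ j, y (-1 - (f j : ℤ)) := by
  classical
  obtain ⟨j0, hj0⟩ : ∃ j0, 2 ≤ f j0 := by
    push_neg at hbad; obtain ⟨j, hj⟩ := hbad; exact ⟨j, by omega⟩
  set Zs := Finset.filter (fun j => f j = 0) Finset.univ with hZs
  set Ns := Finset.filter (fun j => ¬ f j = 0) Finset.univ with hNs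
  have hj0N : j0 ∈ Ns := by simp [hNs]; omega
  have hsupp : ∑ j, f j = ∑ j ∈ Ns, f j := by
    rw [← Finset.sum_filter_add_sum_filter_not Finset.univ (fun j => f j = 0)]
    have : ∑ j ∈ Zs, f j = 0 := Finset.sum_eq_zero fun j hj => (Finset.mem_filter.mp hj).2
    rw [this, zero_add]
  have hlow : Ns.card - 1 ≤ ∑ j ∈ Ns.erase j0, f j := by
    calc Ns.card - 1 = (Ns.erase j0).card := (Finset.card_erase_of_mem hj0N).symm
    _ = (Ns.erase j0).card • 1 := (smul_eq_mul _ _).trans (mul_one _) |>.symm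
    _ ≤ ∑ j ∈ Ns.erase j0, f j := Finset.card_nsmul_le_sum _ _ _ (fun j hj => by
        have := (Finset.mem_filter.mp (Finset.mem_of_mem_erase hj)).2; omega)
  have hsplit : ∑ j ∈ Ns, f j = f j0 + ∑ j ∈ Ns.erase j0, f j :=
    (Finset.add_sum_erase _ _ hj0N).symm
  have hNcard : Ns.card ≤ k2 := by
    have h1 : 1 ≤ Ns.card := Finset.card_pos.mpr ⟨j0, hj0N⟩
    omega
  have hcards : Zs.card + Ns.card = k + 1 := by
    rw [hZs, hNs, Finset.card_filter_add_card_filter_not, Finset.card_univ,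
      Fintype.card_fin]
  have hZcard : k1 + 1 ≤ Zs.card := by omega
  rw [← Finset.prod_filter_mul_prod_filter_not Finset.univ (fun j => f j = 0)]
  have h0 : ∏ j ∈ Zs, y (-1 - (f j : ℤ)) = y (-1) ^ Zs.card := by
    rw [Finset.prod_congr rfl (fun j hj => by
      rw [(Finset.mem_filter.mp hj).2]; norm_num : ∀ j ∈ Zs, y (-1 - (f j : ℤ)) = y (-1)),
      Finset.prod_const]
  rw [h0]
  exact Dvd.dvd.mul_right (pow_dvd_pow _ hZcard) _

open Finset in
lemma good_nonempty (k k1 k2 : ℕ) (hsum : k1 + k2 = k) :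
    (Finset.filter (fun f => ∀ j, f j ≤ 1)
      (Finset.Nat.antidiagonalTuple (k+1) (k2+1))).Nonempty := by
  classical
  refine ⟨fun j => if (j : ℕ) < k2 + 1 then 1 else 0, ?_⟩
  rw [Finset.mem_filter, Finset.Nat.mem_antidiagonalTuple]
  constructor
  · rw [Fin.sum_univ_eq_sum_range (fun i => if i < k2 + 1 then 1 else 0)]
    have : ∀ i, (if i < k2 + 1 then 1 else 0) = if i ∈ Finset.range (k2+1) then 1 else 0 := by
      intro i; simp [Finset.mem_range]
    rw [Finset.sum_congr rfl fun i _ => this i, Finset.sum_ite_mem,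
      Finset.inter_eq_right.mpr (Finset.range_subset_range.mpr (by omega : k2 + 1 ≤ k + 1)),
      Finset.sum_const, Finset.card_range, smul_eq_mul, mul_one]
  · intro j; dsimp only; split <;> omega

open Finset in
lemma key_sum (k k1 k2 : ℕ) (hsum : k1 + k2 = k) :
    ∃ N : ℕ, N ≠ 0 ∧ ∃ b : S,
      (∑ f ∈ Finset.Nat.antidiagonalTuple (k+1) (k2+1), ∏ j, y (-1 - (f j : ℤ)))
        = N • (y (-2) ^ (k2+1) * y (-1) ^ k1) + b * y (-1) ^ (k1+1) := by
  classical
  set T := y (-2) ^ (k2+1) * y (-1) ^ k1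
  set G := Finset.filter (fun f => ∀ j, f j ≤ 1)
      (Finset.Nat.antidiagonalTuple (k+1) (k2+1)) with hG
  refine ⟨G.card, by
    have := good_nonempty k k1 k2 hsum
    simp only [← hG] at this
    exact Finset.card_ne_zero_of_mem this.choose_spec, ?_⟩
  rw [← Finset.sum_filter_add_sum_filter_not (Finset.Nat.antidiagonalTuple (k+1) (k2+1))
    (fun f => ∀ j, f j ≤ 1)]
  have hgood : ∑ f ∈ G, ∏ j, y (-1 - (f j : ℤ)) = G.card • T := by
    have hc : ∀ f ∈ G, ∏ j, y (-1 - (f j : ℤ)) = T := by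
      intro f hf
      rw [hG, Finset.mem_filter, Finset.Nat.mem_antidiagonalTuple] at hf
      exact prod_good k k1 k2 hsum f hf.1 hf.2
    rw [Finset.sum_congr rfl hc, Finset.sum_const]
  have hdvd : y (-1) ^ (k1+1) ∣
      ∑ f ∈ Finset.filter (fun f => ¬ ∀ j, f j ≤ 1)
        (Finset.Nat.antidiagonalTuple (k+1) (k2+1)), ∏ j, y (-1 - (f j : ℤ)) := by
    refine Finset.dvd_sum fun f hf => ?_
    rw [Finset.mem_filter, Finset.Nat.mem_antidiagonalTuple] at hf
    exact dvd_bad k k1 k2 hsum f hf.1 hf.2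
  obtain ⟨b, hb⟩ := hdvd
  exact ⟨b, by rw [hgood, hb]; exact congrArg _ (mul_comm _ _)⟩


/-- for k₁+k₂ = k there are a nonzero c ∈ ℂ and a ∈ U(𝔫̄) with
x_{α₁}(−2)^{k₂+1}·x_{α₁}(−1)^{k₁} = c·R¹_{−1,2(k₂+1)+k₁} + a·x_{α₁}(−1)^{k₁+1}. -/
theorem statement17 (k : ℕ) (hk : 0 < k) (k1 k2 : ℕ) (hsum : k1 + k2 = k) :
    ∃ c : ℂ, c ≠ 0 ∧ ∃ a : U,
      xg 0 (-2) ^ (k2 + 1) * xg 0 (-1) ^ k1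
        = c • Rtr k 0 ((2 * (k2 + 1) + k1 : ℕ) : ℤ) + a * xg 0 (-1) ^ (k1 + 1) := by
  classical
  obtain ⟨N, hN, b, hb⟩ := key_sum k k1 k2 hsum
  refine ⟨(N : ℂ)⁻¹, inv_ne_zero (Nat.cast_ne_zero.mpr hN), -((N : ℂ)⁻¹ • S.val b), ?_⟩
  have htoNat : (((2 * (k2 + 1) + k1 : ℕ) : ℤ) - ((k : ℕ) + 1)).toNat = k2 + 1 := by
    omega
  have hR : Rtr k 0 ((2 * (k2 + 1) + k1 : ℕ) : ℤ)
      = S.val (∑ f ∈ Finset.Nat.antidiagonalTuple (k+1) (k2+1),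
          ∏ j, y (-1 - (f j : ℤ))) := by
    rw [Rtr, htoNat, map_sum]
    exact Finset.sum_congr rfl fun f _ => list_prod_eq (k+1) (fun j => -1 - (f j : ℤ))
  have hT : xg 0 (-2) ^ (k2+1) * xg 0 (-1) ^ k1
      = S.val (y (-2) ^ (k2+1) * y (-1) ^ k1) := rfl
  have hY : xg 0 (-1) ^ (k1+1) = S.val (y (-1) ^ (k1+1)) := rfl
  rw [hR, hb, map_add, map_nsmul, smul_add, hT, hY,
    map_mul S.val b (y (-1) ^ (k1+1))]
  set TU := S.val (y (-2) ^ (k2+1) * y (-1) ^ k1)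
  have h1 : (N : ℂ)⁻¹ • (N • TU) = TU := by
    rw [← Nat.cast_smul_eq_nsmul ℂ, smul_smul,
      inv_mul_cancel₀ (Nat.cast_ne_zero.mpr hN), one_smul]
  rw [h1, neg_mul, smul_mul_assoc]
  abel
end PrincipalSubspaceSL3
end
end
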